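/- arXiv:2501.01167 — 2 statements merged into one kernel-verified Lean document; each statement's English description precedes it below -/
import Mathlib

section
/- Let λ > 1, a > 0, 1 ≤ p ≤ ∞, and r ∈ ℕ with r_λ − (1/λ)(1 − 1/p) > 0. Then there exists a constant c > 0 such that for every n ∈ ℕ the optimal weighted integration error satisfies the lower bound Int_n(𝐖^r_{p,w}(ℝ)) ≥ c n^{−r_λ + (1/λ)(1 − 1/p)}. -/
open MeasureTheory Real Set Filter
open scoped ENNReal NNReal

noncomputable section

/-- The Freud weight `w(x) = exp(-a |x|^λ)`. -/
def freudW (lamb a : ℝ) (x : ℝ) : ℝ := Real.exp (-(a * |x| ^ lamb))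

/-- Weighted `L_{p,w}` norm of `f` over a set `Ω` (sup norm for `p = ∞`). -/
def wLpNorm (w : ℝ → ℝ) (p : ℝ≥0∞) (f : ℝ → ℝ) (Ω : Set ℝ) : ℝ≥0∞ :=
  if p = ∞ then ⨆ x ∈ Ω, (‖f x * w x‖₊ : ℝ≥0∞)
  else (∫⁻ x in Ω, (‖f x * w x‖₊ : ℝ≥0∞) ^ p.toReal) ^ (1 / p.toReal)

/-- The weighted Sobolev norm built from the family of derivatives `D k`, `0 ≤ k ≤ r`. -/
def sobNorm (w : ℝ → ℝ) (p : ℝ≥0∞) (r : ℕ) (D : ℕ → ℝ → ℝ) : ℝ≥0∞ :=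
  if p = ∞ then ⨆ k ∈ Finset.range (r + 1), wLpNorm w ∞ (D k) Set.univ
  else (∑ k ∈ Finset.range (r + 1), wLpNorm w p (D k) Set.univ ^ p.toReal) ^ (1 / p.toReal)

/-- `D` is an admissible system of derivatives of `f = D 0` in the weighted Sobolev space
`W^r_{p,w}(ℝ)`: each `D k`, `k < r`, is (locally) absolutely continuous with a.e. derivative
`D (k+1)`, and all `D k`, `k ≤ r`, have finite weighted `L_p` norm. -/
def IsWSobolev (w : ℝ → ℝ) (p : ℝ≥0∞) (r : ℕ) (D : ℕ → ℝ → ℝ) : Prop :=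
  (∀ k ≤ r, wLpNorm w p (D k) Set.univ ≠ ⊤) ∧
  ∀ k < r, MeasureTheory.LocallyIntegrable (D (k + 1)) volume ∧
    ∀ x : ℝ, D k x = D k 0 + ∫ t in (0 : ℝ)..x, D (k + 1) t

/-- The unit ball of the weighted Sobolev space `W^r_{p,w}(ℝ)`. -/
def WBall (w : ℝ → ℝ) (p : ℝ≥0∞) (r : ℕ) : Set (ℝ → ℝ) :=
  {f | ∃ D : ℕ → ℝ → ℝ, D 0 = f ∧ IsWSobolev w p r D ∧ sobNorm w p r D ≤ 1}

/-- `δ_{λ,p,q}` (with the convention `1/∞ = 0`). -/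
def deltaE (lamb : ℝ) (p q : ℝ≥0∞) : ℝ :=
  if p ≤ q then (1 - 1 / lamb) * (p.toReal⁻¹ - q.toReal⁻¹)
  else (1 / lamb) * (q.toReal⁻¹ - p.toReal⁻¹)

/-- `r_λ = r (1 - 1/λ)`. -/
def rLam (lamb : ℝ) (r : ℕ) : ℝ := r * (1 - 1 / lamb)

/-- `r_{λ,p,q} = r_λ - δ_{λ,p,q}`. -/
def rLpq (lamb : ℝ) (p q : ℝ≥0∞) (r : ℕ) : ℝ := rLam lamb r - deltaE lamb p q

/-- `ν_λ = (2^{λ-1} Γ(λ)⁻¹ Γ(λ/2)²)^{1/λ}`. -/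
def nuLam (lamb : ℝ) : ℝ :=
  ((2 : ℝ) ^ (lamb - 1) * (Real.Gamma lamb)⁻¹ * Real.Gamma (lamb / 2) ^ 2) ^ (1 / lamb)

/-- The Mhaskar–Rakhmanov–Saff number `a_m = ν_λ m^{1/λ}`. -/
def aMRS (lamb : ℝ) (m : ℕ) : ℝ := nuLam lamb * (m : ℝ) ^ (1 / lamb)

/-- The mesh size `h_m = ρ a_m / m`. -/
def hStep (lamb ρ : ℝ) (m : ℕ) : ℝ := ρ * aMRS lamb m / m

/-- The symmetric cardinal B-spline of order `2ℓ`. -/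
def Mspline (ℓ : ℕ) (x : ℝ) : ℝ :=
  ((2 * ℓ - 1).factorial : ℝ)⁻¹ *
    ∑ k ∈ Finset.range (2 * ℓ + 1),
      (-1 : ℝ) ^ k * ((2 * ℓ).choose k : ℝ) * max 0 (x - (k : ℝ) + (ℓ : ℝ)) ^ (2 * ℓ - 1)

/-- The quasi-interpolation operator `Qf(x) = Σ_s Σ_{|j|≤j₀} λ(j) f(s-j) M(x-s)` reproduces
all polynomials of degree at most `2ℓ - 1`. -/
def Reproduces (lam : ℤ → ℝ) (j₀ ℓ : ℕ) : Prop :=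
  ∀ P : Polynomial ℝ, P.natDegree ≤ 2 * ℓ - 1 → ∀ x : ℝ,
    (∑' s : ℤ, ∑ j ∈ Finset.Icc (-(j₀ : ℤ)) (j₀ : ℤ),
      lam j * P.eval ((s : ℝ) - (j : ℝ)) * Mspline ℓ (x - (s : ℝ))) = P.eval x

/-- The truncated scaled B-spline quasi-interpolation operator `Q_{ρ,m}`. -/
def Qrm (lam : ℤ → ℝ) (j₀ ℓ : ℕ) (lamb ρ : ℝ) (m : ℕ) (f : ℝ → ℝ) (x : ℝ) : ℝ :=
  if |x| ≤ ρ * aMRS lamb m then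
    ∑ s ∈ Finset.Icc (-((m : ℤ) + ℓ - 1)) ((m : ℤ) + ℓ - 1),
      ∑ j ∈ Finset.Icc (-(j₀ : ℤ)) (j₀ : ℤ),
        lam j * f (((s - j : ℤ) : ℝ) * hStep lamb ρ m) *
          Mspline ℓ (x / hStep lamb ρ m - (s : ℝ))
  else 0

/-- `2^κ` with `κ = ⌈log₂(2ℓ) - 1⌉`. -/
def twoPowKappa (ℓ : ℕ) : ℝ := (2 : ℝ) ^ (⌈Real.logb 2 (2 * ℓ) - 1⌉ : ℤ)

/-- The truncated scaled B-spline interpolation operator `P_{ρ,m}`. -/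
def Prm (lam : ℤ → ℝ) (j₀ ℓ : ℕ) (lamb ρ : ℝ) (m : ℕ) (f : ℝ → ℝ) (x : ℝ) : ℝ :=
  if |x| ≤ ρ * aMRS lamb m then
    (∑ s ∈ Finset.Icc (-((m : ℤ) + ℓ - 1)) ((m : ℤ) + ℓ - 1),
      (Mspline ℓ 0)⁻¹ * f ((s : ℝ) * hStep lamb ρ m) *
        Mspline ℓ (twoPowKappa ℓ * (x / hStep lamb ρ m) - twoPowKappa ℓ * (s : ℝ)))
    + (∑ s ∈ Finset.Icc (-((m : ℤ) + ℓ - 1)) ((m : ℤ) + ℓ - 1),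
        ∑ j ∈ Finset.Icc (-(j₀ : ℤ)) (j₀ : ℤ),
          lam j * f (((s - j : ℤ) : ℝ) * hStep lamb ρ m) *
            Mspline ℓ (x / hStep lamb ρ m - (s : ℝ)))
    - ∑ s ∈ Finset.Icc (-((m : ℤ) + ℓ - 1)) ((m : ℤ) + ℓ - 1),
        ∑ j ∈ Finset.Icc (-(j₀ : ℤ)) (j₀ : ℤ),
          ∑ i ∈ Finset.Icc (s - (ℓ : ℤ)) (s + (ℓ : ℤ)),
            (Mspline ℓ 0)⁻¹ * lam j * Mspline ℓ ((i : ℝ) - (s : ℝ)) *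
              f (((s - j : ℤ) : ℝ) * hStep lamb ρ m) *
              Mspline ℓ (twoPowKappa ℓ * (x / hStep lamb ρ m) - twoPowKappa ℓ * (s : ℝ) - (i : ℝ))
  else 0

/-- The sampling `n`-width `ϱ_n(F, X)` where the error is measured by `err`. -/
def sampWidth (n : ℕ) (F : Set (ℝ → ℝ)) (err : (ℝ → ℝ) → ℝ≥0∞) : ℝ≥0∞ :=
  ⨅ (k : ℕ) (_ : k ≤ n) (ξ : Fin k → ℝ) (φ : Fin k → ℝ → ℝ),
    ⨆ f ∈ F, err (fun x => f x - ∑ i, f (ξ i) * φ i x)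

/-- The quantity `Int_n(F)` of optimal quadrature with at most `n` nodes for the weight `w`. -/
def IntWidth (n : ℕ) (F : Set (ℝ → ℝ)) (w : ℝ → ℝ) : ℝ≥0∞ :=
  ⨅ (k : ℕ) (_ : k ≤ n) (ξ : Fin k → ℝ) (μ : Fin k → ℝ),
    ⨆ f ∈ F, ENNReal.ofReal |(∫ x, f x * w x) - ∑ i, μ i * f (ξ i)|

/-- The discrete weighted norm `‖(c_s)_{|s|≤n}‖_{p,w,n}` at the nodes `x_s = s h`. -/
def discNorm (w : ℝ → ℝ) (h : ℝ) (p : ℝ≥0∞) (n : ℤ) (c : ℤ → ℝ) : ℝ≥0∞ :=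
  if p = ∞ then ⨆ s ∈ Finset.Icc (-n) n, (‖w ((s : ℝ) * h) * c s‖₊ : ℝ≥0∞)
  else (∑ s ∈ Finset.Icc (-n) n, (‖w ((s : ℝ) * h) * c s‖₊ : ℝ≥0∞) ^ p.toReal) ^ (1 / p.toReal)

/-- A spline `Σ_{|s|≤n} b_s M(x/h - s)` from the space `S_{ρ,m}` (with `n = m - ℓ`). -/
def splineOf (ℓ : ℕ) (h : ℝ) (n : ℤ) (b : ℤ → ℝ) (x : ℝ) : ℝ :=
  ∑ s ∈ Finset.Icc (-n) n, b s * Mspline ℓ (x / h - (s : ℝ))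

/-- `m(n)`: the largest integer `m` with `2(m + ℓ + j₀) - 1 ≤ n`. -/
def mOf (ℓ j₀ n : ℕ) : ℕ := (n + 1) / 2 - ℓ - j₀

end

noncomputable section AuxStmt11

/-- a smooth bump supported in `[1/4,3/4] ⊆ (0,1)`, equal to 1 on `[3/8,5/8]`. -/
def bφ : ContDiffBump (1/2 : ℝ) := ⟨1/8, 1/4, by norm_num, by norm_num⟩

def φfn : ℝ → ℝ := fun x => bφ x

def ψfn (k : ℕ) : ℝ → ℝ := iteratedDeriv k φfn

lemma φfn_contDiff : ContDiff ℝ (⊤ : ℕ∞) φfn := bφ.contDiff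

lemma φfn_nonneg (x : ℝ) : 0 ≤ φfn x := bφ.nonneg

lemma ψfn_zero : ψfn 0 = φfn := iteratedDeriv_zero

lemma ψfn_support {k : ℕ} {x : ℝ} (hx : x ∉ Set.Ioo (0:ℝ) 1) : ψfn k x = 0 := by
  have hx' : x ∉ tsupport φfn := by
    rw [show tsupport φfn = Metric.closedBall (1/2 : ℝ) (1/4) from bφ.tsupport_eq]
    intro hmem
    have h1 : |x - 1/2| ≤ 1/4 := by simpa [Real.dist_eq] using hmem
    rw [abs_le] at h1
    exact hx ⟨by linarith [h1.1], by linarith [h1.2]⟩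
  have h0 : iteratedFDeriv ℝ k φfn x = 0 := by
    by_contra h
    exact hx' (support_iteratedFDeriv_subset k (Function.mem_support.2 h))
  rw [ψfn, iteratedDeriv_eq_iteratedFDeriv, h0]
  rfl

lemma ψfn_hasDerivAt (k : ℕ) (y : ℝ) : HasDerivAt (ψfn k) (ψfn (k+1) y) y := by
  have hd : Differentiable ℝ (iteratedDeriv k φfn) :=
    φfn_contDiff.differentiable_iteratedDeriv k (by exact_mod_cast WithTop.coe_lt_top _)
  rw [ψfn, ψfn, iteratedDeriv_succ]
  exact (hd y).hasDerivAt

lemma ψfn_continuous (k : ℕ) : Continuous (ψfn k) := by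
  have hd : Differentiable ℝ (ψfn k) := fun x => (ψfn_hasDerivAt k x).differentiableAt
  exact hd.continuous

lemma ψfn_bound (k : ℕ) : ∃ C : ℝ, 0 ≤ C ∧ ∀ x, |ψfn k x| ≤ C := by
  have hcs : HasCompactSupport fun x => |ψfn k x| := by
    apply HasCompactSupport.intro (isCompact_Icc (a := (0:ℝ)) (b := 1))
    intro x hx
    rw [ψfn_support (fun hmem => hx ⟨le_of_lt hmem.1, le_of_lt hmem.2⟩), abs_zero]
  obtain ⟨x₀, hx₀⟩ := ((ψfn_continuous k).abs).exists_forall_ge_of_hasCompactSupport hcs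
  exact ⟨|ψfn k x₀|, abs_nonneg _, hx₀⟩

def Iφ : ℝ := ∫ t in (0:ℝ)..1, φfn t

lemma Iφ_ge : (1:ℝ)/4 ≤ Iφ := by
  have h1 : ∫ t in (3/8 : ℝ)..(5/8 : ℝ), φfn t = 1/4 := by
    rw [intervalIntegral.integral_congr (g := fun _ => (1:ℝ))]
    · simp; norm_num
    · intro x hx
      rw [Set.uIcc_of_le (by norm_num)] at hx
      apply bφ.one_of_mem_closedBall
      simp only [Metric.mem_closedBall, Real.dist_eq]
      have hr : bφ.rIn = 1/8 := rfl
      rw [hr, abs_le]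
      exact ⟨by linarith [hx.1], by linarith [hx.2]⟩
  have h2 : ∫ t in (3/8 : ℝ)..(5/8 : ℝ), φfn t ≤ Iφ := by
    apply intervalIntegral.integral_mono_interval (by norm_num) (by norm_num) (by norm_num)
    · exact Eventually.of_forall φfn_nonneg
    · exact bφ.continuous.intervalIntegrable _ _
  linarith

lemma Iφ_pos : 0 < Iφ := lt_of_lt_of_le (by norm_num) Iφ_ge

lemma rpow_gap {lamb : ℝ} (hl : 1 < lamb) {y x L : ℝ} (hy : 0 ≤ y) (hyx : y ≤ x) (hxL : x ≤ L) :
    x ^ lamb - y ^ lamb ≤ lamb * L ^ (lamb - 1) * (x - y) := by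
  rcases eq_or_lt_of_le hyx with rfl | hlt
  · simp
  · have hcont : ContinuousOn (fun t : ℝ => t ^ lamb) (Icc y x) :=
      (continuous_id.rpow_const (fun t => Or.inr (by linarith))).continuousOn
    have hder : ∀ t ∈ Ioo y x, HasDerivAt (fun t : ℝ => t ^ lamb) (lamb * t ^ (lamb - 1)) t :=
      fun t ht => Real.hasDerivAt_rpow_const (Or.inl (ne_of_gt (lt_of_le_of_lt hy ht.1)))
    obtain ⟨c, hc, heq⟩ := exists_hasDerivAt_eq_slope _ _ hlt hcont hder
    have h0c : 0 < c := lt_of_le_of_lt hy hc.1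
    have hcL : c ≤ L := le_trans (le_of_lt hc.2) hxL
    have hxy : 0 < x - y := by linarith
    rw [eq_div_iff (ne_of_gt hxy)] at heq
    rw [← heq]
    have hcLpow : c ^ (lamb - 1) ≤ L ^ (lamb - 1) :=
      Real.rpow_le_rpow (le_of_lt h0c) hcL (by linarith)
    have hlpos : 0 < lamb := by linarith
    have := mul_le_mul_of_nonneg_right (mul_le_mul_of_nonneg_left hcLpow (le_of_lt hlpos)) (le_of_lt hxy)
    linarith

lemma abs_sum_le_of_unique {ι : Type*} (S : Finset ι) (u : ι → ℝ) (M : ℝ) (hM : 0 ≤ M)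
    (hb : ∀ s ∈ S, |u s| ≤ M)
    (huniq : ∀ s ∈ S, ∀ s' ∈ S, u s ≠ 0 → u s' ≠ 0 → s = s') :
    |∑ s ∈ S, u s| ≤ M := by
  classical
  by_cases hex : ∃ s ∈ S, u s ≠ 0
  · obtain ⟨s0, hs0, hne⟩ := hex
    rw [Finset.sum_eq_single_of_mem s0 hs0 (fun b hb0 hbne => by
      by_contra hb0ne
      exact hbne (huniq b hb0 s0 hs0 hb0ne hne))]
    exact hb s0 hs0
  · push_neg at hex
    rw [Finset.sum_eq_zero hex, abs_zero]
    exact hM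

lemma nat_interval_uniq {h : ℝ} (hh : 0 < h) {s s' : ℕ} {x : ℝ}
    (h1 : (s:ℝ)*h ≤ x) (h2 : x < ((s:ℝ)+1)*h)
    (h1' : (s':ℝ)*h ≤ x) (h2' : x < ((s':ℝ)+1)*h) : s = s' := by
  have a1 : (s:ℝ) < (s':ℝ) + 1 := by
    have := lt_of_le_of_lt h1 h2'
    exact lt_of_mul_lt_mul_right (by linarith) (le_of_lt hh)
  have a2 : (s':ℝ) < (s:ℝ) + 1 := by
    have := lt_of_le_of_lt h1' h2
    exact lt_of_mul_lt_mul_right (by linarith) (le_of_lt hh)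
  have b1 : s < s' + 1 := by exact_mod_cast a1
  have b2 : s' < s + 1 := by exact_mod_cast a2
  omega

end AuxStmt11

section KeyLemma
open scoped BigOperators

set_option maxHeartbeats 2000000 in
lemma key_lemma (lamb a : ℝ) (hlamb : 1 < lamb) (ha : 0 < a)
    (p : ℝ≥0∞) (hp : 1 ≤ p) (r : ℕ) (C : ℝ) (hC1 : 1 ≤ C)
    (hCb : ∀ k ≤ r, ∀ x, |ψfn k x| ≤ C)
    (n : ℕ) (hn : 1 ≤ n) (k : ℕ) (hk : k ≤ n) (ξ : Fin k → ℝ) :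
    ∃ f ∈ WBall (freudW lamb a) p r,
      (∀ i, f (ξ i) = 0) ∧
      3 * Real.exp (-(a * lamb * 4 ^ (lamb - 1))) * Iφ / (16 * ((r:ℝ)+1) * C) *
          (n : ℝ) ^ (-(rLam lamb r - (1/lamb) * (1 - p.toReal⁻¹)))
        ≤ ∫ x, f x * freudW lamb a x := by
  classical
  set w : ℝ → ℝ := freudW lamb a with hw
  have hlamb0 : (0:ℝ) < lamb := by linarith
  have hw_pos : ∀ x, 0 < w x := fun x => Real.exp_pos _
  have hw_eq : ∀ x : ℝ, 0 ≤ x → w x = Real.exp (-(a * x ^ lamb)) := by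
    intro x hx; rw [hw]; rw [show freudW lamb a x = Real.exp (-(a * |x| ^ lamb)) from rfl,
      abs_of_nonneg hx]
  have hwcont : Continuous w := by
    rw [hw, show freudW lamb a = fun x => Real.exp (-(a * |x| ^ lamb)) from rfl]
    exact Real.continuous_exp.comp
      ((continuous_const.mul (continuous_abs.rpow_const (fun x => Or.inr hlamb0.le))).neg)
  set u : ℝ := (n : ℝ) with hu
  have hu1 : (1:ℝ) ≤ u := by rw [hu]; exact_mod_cast hn
  have hu0 : (0:ℝ) < u := by linarith
  set h : ℝ := u ^ (1/lamb - 1) with hh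
  have hh0 : 0 < h := Real.rpow_pos_of_pos hu0 _
  have hexp_neg : 1/lamb - 1 ≤ 0 := by
    have h1 : 1/lamb < 1 := by rw [div_lt_one hlamb0]; exact hlamb
    linarith
  have hh1 : h ≤ 1 := Real.rpow_le_one_of_one_le_of_nonpos hu1 hexp_neg
  have hnh : u * h = u ^ (1/lamb) := by
    have e : u ^ ((1:ℝ) + (1/lamb - 1)) = u ^ (1:ℝ) * u ^ (1/lamb - 1) := Real.rpow_add hu0 _ _
    rw [Real.rpow_one] at e
    rw [hh, ← e]
    congr 1
    ring
  set L : ℝ := 4 * (u * h) with hL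
  have hL4' : L = 4 * u ^ (1/lamb) := by rw [hL, hnh]
  have huh1 : (1:ℝ) ≤ u * h := by
    rw [hnh]
    calc (1:ℝ) = u ^ (0:ℝ) := (Real.rpow_zero u).symm
      _ ≤ u ^ (1/lamb) := Real.rpow_le_rpow_of_exponent_le hu1 (by positivity)
  have hL1 : (1:ℝ) ≤ L := by rw [hL]; linarith
  have hL0 : 0 < L := by linarith
  have hlne : lamb ≠ 0 := ne_of_gt hlamb0
  have hL4 : L ^ (lamb - 1) * h = 4 ^ (lamb - 1) := by
    have h1 : L ^ (lamb-1) = 4 ^ (lamb-1) * (u ^ (1/lamb)) ^ (lamb-1) := by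
      rw [hL4', Real.mul_rpow (by norm_num) (Real.rpow_nonneg hu0.le _)]
    have h2 : (u ^ (1/lamb)) ^ (lamb-1) = u ^ ((1/lamb) * (lamb-1)) :=
      (Real.rpow_mul hu0.le _ _).symm
    have h3 : u ^ ((1/lamb) * (lamb-1)) * h = 1 := by
      rw [hh, ← Real.rpow_add hu0,
        show (1/lamb)*(lamb-1) + (1/lamb - 1) = 0 by field_simp; ring]
      exact Real.rpow_zero u
    calc L ^ (lamb-1) * h = 4^(lamb-1) * (u ^ ((1/lamb)*(lamb-1)) * h) := by
          rw [h1, h2]; ring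
      _ = 4^(lamb-1) := by rw [h3, mul_one]
  set B : ℝ := a * lamb * 4 ^ (lamb - 1) with hB
  set q : ℝ := p.toReal with hq
  have hqi0 : 0 ≤ q⁻¹ := inv_nonneg.2 ENNReal.toReal_nonneg
  have hqi1 : q⁻¹ ≤ 1 := by
    by_cases hp' : p = ∞
    · simp [hq, hp']
    · have h1q : 1 ≤ q := by rw [hq]; simpa using ENNReal.toReal_mono hp' hp
      exact inv_le_one_of_one_le₀ h1q
  set Lq : ℝ := L ^ q⁻¹ with hLq
  have hLq0 : 0 < Lq := Real.rpow_pos_of_pos hL0 _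
  have hLq1 : 1 ≤ Lq := by
    rw [hLq]
    calc (1:ℝ) = L ^ (0:ℝ) := (Real.rpow_zero L).symm
      _ ≤ L ^ q⁻¹ := Real.rpow_le_rpow_of_exponent_le hL1 hqi0
  have hC0 : 0 < C := lt_of_lt_of_le one_pos hC1
  have hr1 : (0:ℝ) < (r:ℝ) + 1 := by positivity
  set γ : ℝ := h ^ r / (((r:ℝ)+1) * C * Lq) with hγ
  have hγ0 : 0 < γ := by rw [hγ]; positivity
  set M : ℝ := γ * C * (h ^ r)⁻¹ with hM
  have hM0 : 0 < M := by rw [hM]; positivity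
  have hMLq : M * Lq = 1 / ((r:ℝ)+1) := by
    rw [hM, hγ]
    field_simp
  have hMle : M ≤ 1/((r:ℝ)+1) := by
    calc M ≤ M * Lq := le_mul_of_one_le_right hM0.le hLq1
      _ = 1/((r:ℝ)+1) := hMLq
  -- the free intervals
  set P : ℕ → Prop := fun s => ∀ i, ξ i ∉ Set.Ico ((s:ℝ)*h) (((s:ℝ)+1)*h) with hP
  set S : Finset ℕ := (Finset.range (4*n)).filter P with hS
  have hScard : 3*n ≤ S.card := by
    set T : Finset ℕ := (Finset.range (4*n)).filter (fun s => ¬ P s) with hT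
    set F : ℕ → ℝ := fun s : ℕ =>
      if hs : ∃ i, ξ i ∈ Set.Ico ((s:ℝ)*h) (((s:ℝ)+1)*h) then ξ hs.choose else 0 with hF
    have hTcard : T.card ≤ k := by
      have hwit : ∀ s ∈ T, ∃ i, ξ i ∈ Set.Ico ((s:ℝ)*h) (((s:ℝ)+1)*h) := by
        intro s hs
        have h2 := (Finset.mem_filter.1 hs).2
        simp only [hP] at h2
        push_neg at h2
        exact h2
      have hmaps : ∀ s ∈ T, F s ∈ Finset.univ.image ξ := by
        intro s hs
        simp only [hF]
        rw [dif_pos (hwit s hs)]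
        exact Finset.mem_image_of_mem ξ (Finset.mem_univ _)
      have hinj : Set.InjOn F ↑T := by
        intro s hsT t htT heq
        have hsE := hwit s (Finset.mem_coe.1 hsT)
        have htE := hwit t (Finset.mem_coe.1 htT)
        simp only [hF, dif_pos hsE, dif_pos htE] at heq
        have h1 := hsE.choose_spec
        have h2 := htE.choose_spec
        rw [heq] at h1
        exact nat_interval_uniq hh0 h1.1 h1.2 h2.1 h2.2
      calc T.card ≤ (Finset.univ.image ξ).card := Finset.card_le_card_of_injOn F hmaps hinj
        _ ≤ Finset.univ.card := Finset.card_image_le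
        _ = k := by simp
    have hun : (Finset.range (4*n)).filter P ∪ T = Finset.range (4*n) := by
      rw [hT]; exact Finset.filter_union_filter_not_eq P _
    have hcard4 : 4*n ≤ S.card + T.card := by
      calc 4*n = (Finset.range (4*n)).card := (Finset.card_range _).symm
        _ = ((Finset.range (4*n)).filter P ∪ T).card := by rw [hun]
        _ ≤ S.card + T.card := by rw [hS]; exact Finset.card_union_le _ _
    omega
  -- the fooling function and its derivatives
  set gs : ℕ → ℝ := fun s => γ * Real.exp (a * ((s:ℝ)*h) ^ lamb) with hgs
  have hgs0 : ∀ s, 0 < gs s := fun s => by simp only [hgs]; positivity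
  set D : ℕ → ℝ → ℝ := fun j x => ∑ s ∈ S, gs s * (h ^ j)⁻¹ * ψfn j (x/h - (s:ℝ)) with hD
  have hψsupp : ∀ (j : ℕ) (s : ℕ) (x : ℝ), ψfn j (x/h - (s:ℝ)) ≠ 0 →
      (s:ℝ)*h < x ∧ x < ((s:ℝ)+1)*h := by
    intro j s x hne
    have harg : x/h - (s:ℝ) ∈ Set.Ioo (0:ℝ) 1 := by
      by_contra hnot; exact hne (ψfn_support hnot)
    obtain ⟨e1, e2⟩ := harg
    constructor
    · have h1 : (s:ℝ) < x/h := by linarith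
      calc (s:ℝ)*h < (x/h)*h := mul_lt_mul_of_pos_right h1 hh0
        _ = x := by field_simp
    · have h1 : x/h < (s:ℝ)+1 := by linarith
      calc x = (x/h)*h := by field_simp
        _ < ((s:ℝ)+1)*h := mul_lt_mul_of_pos_right h1 hh0
  have hsran : ∀ s ∈ S, ((s:ℝ)+1)*h ≤ L ∧ 0 ≤ (s:ℝ)*h := by
    intro s hs
    have hs4 : s < 4*n := Finset.mem_range.1 (Finset.mem_filter.1 hs).1
    constructor
    · have h1 : ((s:ℝ)+1) ≤ 4*u := by
        rw [hu]; exact_mod_cast Nat.succ_le_of_lt hs4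
      calc ((s:ℝ)+1)*h ≤ (4*u)*h := mul_le_mul_of_nonneg_right h1 hh0.le
        _ = L := by rw [hL]; ring
    · positivity
  have hterm : ∀ j, j ≤ r → ∀ s ∈ S, ∀ x : ℝ,
      |gs s * (h ^ j)⁻¹ * ψfn j (x/h - (s:ℝ)) * w x| ≤ M := by
    intro j hj s hs x
    by_cases hz : ψfn j (x/h - (s:ℝ)) = 0
    · rw [hz]; simpa using hM0.le
    · obtain ⟨hx1, hx2⟩ := hψsupp j s x hz
      have hx0 : 0 ≤ x := le_trans (hsran s hs).2 hx1.le
      have e1 : Real.exp (a * ((s:ℝ)*h) ^ lamb) * w x ≤ 1 := by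
        rw [hw_eq x hx0, ← Real.exp_add, Real.exp_le_one_iff]
        have hpow : ((s:ℝ)*h) ^ lamb ≤ x ^ lamb :=
          Real.rpow_le_rpow (hsran s hs).2 hx1.le hlamb0.le
        have hmul := mul_le_mul_of_nonneg_left hpow ha.le
        linarith
      have e2 : (h ^ j : ℝ)⁻¹ ≤ (h ^ r)⁻¹ :=
        inv_anti₀ (pow_pos hh0 r) (pow_le_pow_of_le_one hh0.le hh1 hj)
      have habs : |gs s * (h ^ j)⁻¹ * ψfn j (x/h - (s:ℝ)) * w x|
          = gs s * (h ^ j)⁻¹ * |ψfn j (x/h - (s:ℝ))| * w x := by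
        rw [abs_mul, abs_mul, abs_mul, abs_of_nonneg (hgs0 s).le,
          abs_of_nonneg (inv_nonneg.2 (pow_nonneg hh0.le j)), abs_of_nonneg (hw_pos x).le]
      rw [habs]
      simp only [hgs]
      calc γ * Real.exp (a * ((s:ℝ)*h) ^ lamb) * (h ^ j)⁻¹ * |ψfn j (x/h - (s:ℝ))| * w x
          ≤ γ * Real.exp (a * ((s:ℝ)*h) ^ lamb) * (h ^ j)⁻¹ * C * w x := by
            gcongr <;> first | exact hCb j hj _ | exact (hw_pos x).le
        _ = (γ * C) * ((h^j)⁻¹ * (Real.exp (a * ((s:ℝ)*h) ^ lamb) * w x)) := by ring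
        _ ≤ (γ * C) * ((h^r)⁻¹ * 1) := by
            apply mul_le_mul_of_nonneg_left _ (mul_nonneg hγ0.le hC0.le)
            apply mul_le_mul e2 e1 (mul_nonneg (Real.exp_pos _).le (hw_pos x).le)
              (inv_nonneg.2 (pow_nonneg hh0.le r))
        _ = M := by rw [hM]; ring
  have hDb : ∀ j, j ≤ r → ∀ x, |D j x * w x| ≤ M := by
    intro j hj x
    simp only [hD]
    rw [Finset.sum_mul]
    apply abs_sum_le_of_unique S _ M hM0.le
    · intro s hs; exact hterm j hj s hs x
    · intro s hs s' hs' hne hne'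
      have h1 : ψfn j (x/h - (s:ℝ)) ≠ 0 := by
        intro h0; apply hne; rw [h0]; ring
      have h2 : ψfn j (x/h - (s':ℝ)) ≠ 0 := by
        intro h0; apply hne'; rw [h0]; ring
      obtain ⟨a1, a2⟩ := hψsupp j s x h1
      obtain ⟨b1, b2⟩ := hψsupp j s' x h2
      exact nat_interval_uniq hh0 a1.le a2 b1.le b2
  have hD0 : ∀ j x, x ∉ Set.Icc (0:ℝ) L → D j x = 0 := by
    intro j x hx
    simp only [hD]
    apply Finset.sum_eq_zero
    intro s hs
    have hz : ψfn j (x/h - (s:ℝ)) = 0 := by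
      by_contra hne
      obtain ⟨a1, a2⟩ := hψsupp j s x hne
      exact hx ⟨le_trans (hsran s hs).2 a1.le, le_trans a2.le (hsran s hs).1⟩
    rw [hz, mul_zero]
  have hf0 : ∀ i, D 0 (ξ i) = 0 := by
    intro i
    simp only [hD]
    apply Finset.sum_eq_zero
    intro s hs
    have hz : ψfn 0 (ξ i/h - (s:ℝ)) = 0 := by
      by_contra hne
      obtain ⟨a1, a2⟩ := hψsupp 0 s (ξ i) hne
      exact ((Finset.mem_filter.1 hs).2) i ⟨a1.le, a2⟩
    rw [hz, mul_zero]
  have hDd : ∀ j x, HasDerivAt (D j) (D (j+1) x) x := by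
    intro j x
    have hsum : HasDerivAt (fun y => ∑ s ∈ S, gs s * (h ^ j)⁻¹ * ψfn j (y/h - (s:ℝ)))
        (∑ s ∈ S, gs s * (h ^ (j+1))⁻¹ * ψfn (j+1) (x/h - (s:ℝ))) x := by
      apply HasDerivAt.fun_sum
      intro s _
      have hin : HasDerivAt (fun y : ℝ => y/h - (s:ℝ)) (1/h) x := by
        simpa using ((hasDerivAt_id x).div_const h).sub_const (s:ℝ)
      have hout := ψfn_hasDerivAt j (x/h - (s:ℝ))
      have hcomp := (hout.comp x hin).const_mul (gs s * (h ^ j)⁻¹)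
      have heq : gs s * (h ^ (j+1))⁻¹ * ψfn (j+1) (x/h - (s:ℝ))
          = gs s * (h ^ j)⁻¹ * (ψfn (j+1) (x/h - (s:ℝ)) * (1/h)) := by
        rw [pow_succ, mul_inv]
        ring
      rw [heq]
      exact hcomp
    simpa only [hD] using hsum
  have hDc : ∀ j, Continuous (D j) := by
    intro j
    have hd : Differentiable ℝ (D j) := fun x => (hDd j x).differentiableAt
    exact hd.continuous
  -- Lp norm bounds
  have hwLp : ∀ j, j ≤ r → wLpNorm w p (D j) Set.univ ≤ ENNReal.ofReal (1/((r:ℝ)+1)) := by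
    intro j hj
    by_cases hp' : p = ∞
    · rw [wLpNorm, if_pos hp']
      refine iSup₂_le fun x _ => ?_
      rw [← ENNReal.ofReal_coe_nnreal, coe_nnnorm]
      apply ENNReal.ofReal_le_ofReal
      rw [Real.norm_eq_abs]
      exact le_trans (hDb j hj x) hMle
    · have hq0' : 0 < q := by
        rw [hq]
        exact ENNReal.toReal_pos (ne_of_gt (lt_of_lt_of_le zero_lt_one hp)) hp'
      rw [wLpNorm, if_neg hp', Measure.restrict_univ]
      have hpt : ∀ x : ℝ, (‖D j x * w x‖₊ : ℝ≥0∞) ^ p.toReal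
          ≤ (Set.Icc (0:ℝ) L).indicator (fun _ => ENNReal.ofReal M ^ p.toReal) x := by
        intro x
        by_cases hx : x ∈ Set.Icc (0:ℝ) L
        · rw [Set.indicator_of_mem hx]
          apply ENNReal.rpow_le_rpow _ ENNReal.toReal_nonneg
          rw [← ENNReal.ofReal_coe_nnreal, coe_nnnorm]
          exact ENNReal.ofReal_le_ofReal (by rw [Real.norm_eq_abs]; exact hDb j hj x)
        · rw [Set.indicator_of_notMem hx, hD0 j x hx]
          simp only [zero_mul, nnnorm_zero, ENNReal.coe_zero]
          rw [ENNReal.zero_rpow_of_pos (by rw [← hq]; exact hq0')]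
      calc (∫⁻ x, (‖D j x * w x‖₊ : ℝ≥0∞) ^ p.toReal) ^ (1/p.toReal)
          ≤ (∫⁻ x, (Set.Icc (0:ℝ) L).indicator (fun _ => ENNReal.ofReal M ^ p.toReal) x) ^ (1/p.toReal) :=
            ENNReal.rpow_le_rpow (lintegral_mono hpt) (by positivity)
        _ = (ENNReal.ofReal M ^ p.toReal * ENNReal.ofReal L) ^ (1/p.toReal) := by
            rw [lintegral_indicator measurableSet_Icc, setLIntegral_const, Real.volume_Icc, sub_zero]
        _ = ENNReal.ofReal ((M ^ q * L) ^ q⁻¹) := by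
            rw [ENNReal.ofReal_rpow_of_pos hM0, ← ENNReal.ofReal_mul (by positivity),
              ENNReal.ofReal_rpow_of_pos (by positivity), ← hq, one_div]
        _ = ENNReal.ofReal (1/((r:ℝ)+1)) := by
            congr 1
            rw [Real.mul_rpow (by positivity) hL0.le, ← Real.rpow_mul hM0.le,
              mul_inv_cancel₀ (ne_of_gt hq0'), Real.rpow_one, ← hLq, hMLq]
  have hfin : ∀ j ≤ r, wLpNorm w p (D j) Set.univ ≠ ⊤ := fun j hj =>
    (lt_of_le_of_lt (hwLp j hj) ENNReal.ofReal_lt_top).ne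
  have hofr1 : ENNReal.ofReal (1/((r:ℝ)+1)) ≤ 1 := by
    rw [show (1:ℝ≥0∞) = ENNReal.ofReal 1 from ENNReal.ofReal_one.symm]
    apply ENNReal.ofReal_le_ofReal
    rw [div_le_one hr1]; linarith
  have hsob : sobNorm w p r D ≤ 1 := by
    by_cases hp' : p = ∞
    · rw [sobNorm, if_pos hp']
      refine iSup₂_le fun j hj => ?_
      rw [← hp']
      exact le_trans (hwLp j (Finset.mem_range_succ_iff.1 hj)) hofr1
    · have h1q : 1 ≤ q := by rw [hq]; simpa using ENNReal.toReal_mono hp' hp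
      have hq0' : 0 < q := lt_of_lt_of_le one_pos h1q
      rw [sobNorm, if_neg hp']
      have hsum : ∑ j ∈ Finset.range (r+1), wLpNorm w p (D j) Set.univ ^ p.toReal
          ≤ (r+1 : ℕ) • (ENNReal.ofReal (1/((r:ℝ)+1)) ^ p.toReal) := by
        have hsum1 := Finset.sum_le_card_nsmul (Finset.range (r+1))
          (fun j => wLpNorm w p (D j) Set.univ ^ p.toReal)
          (ENNReal.ofReal (1/((r:ℝ)+1)) ^ p.toReal)
          (fun j hj => ENNReal.rpow_le_rpow (hwLp j (Finset.mem_range_succ_iff.1 hj))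
            ENNReal.toReal_nonneg)
        simpa using hsum1
      have hbase : (r+1 : ℕ) • (ENNReal.ofReal (1/((r:ℝ)+1)) ^ p.toReal) ≤ 1 := by
        rw [nsmul_eq_mul]
        have e1 : ENNReal.ofReal (1/((r:ℝ)+1)) ^ p.toReal ≤ ENNReal.ofReal (1/((r:ℝ)+1)) := by
          have e2 : ENNReal.ofReal (1/((r:ℝ)+1)) ^ p.toReal
              ≤ ENNReal.ofReal (1/((r:ℝ)+1)) ^ (1:ℝ) :=
            ENNReal.rpow_le_rpow_of_exponent_ge hofr1 (by rw [← hq]; exact h1q)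
          rwa [ENNReal.rpow_one] at e2
        calc ((r+1 : ℕ) : ℝ≥0∞) * ENNReal.ofReal (1/((r:ℝ)+1)) ^ p.toReal
            ≤ ((r+1 : ℕ) : ℝ≥0∞) * ENNReal.ofReal (1/((r:ℝ)+1)) := mul_le_mul_right e1 _
          _ = ENNReal.ofReal (((r+1 : ℕ) : ℝ) * (1/((r:ℝ)+1))) := by
              rw [← ENNReal.ofReal_natCast, ← ENNReal.ofReal_mul (by positivity)]
          _ = 1 := by
              rw [show ((r+1 : ℕ) : ℝ) * (1/((r:ℝ)+1)) = 1 by push_cast; field_simp]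
              exact ENNReal.ofReal_one
      calc (∑ j ∈ Finset.range (r+1), wLpNorm w p (D j) Set.univ ^ p.toReal) ^ (1/p.toReal)
          ≤ ((r+1 : ℕ) • (ENNReal.ofReal (1/((r:ℝ)+1)) ^ p.toReal)) ^ (1/p.toReal) :=
            ENNReal.rpow_le_rpow hsum (by positivity)
        _ ≤ (1 : ℝ≥0∞) ^ (1/p.toReal) := ENNReal.rpow_le_rpow hbase (by positivity)
        _ = 1 := ENNReal.one_rpow _
  have hmem : D 0 ∈ WBall w p r := by
    refine ⟨D, rfl, ⟨hfin, fun j hj => ⟨(hDc (j+1)).locallyIntegrable, fun x => ?_⟩⟩, hsob⟩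
    have hFTC := intervalIntegral.integral_eq_sub_of_hasDerivAt (f := D j) (f' := D (j+1))
      (fun t _ => hDd j t) ((hDc (j+1)).intervalIntegrable 0 x)
    linarith [hFTC]
  -- the weighted integral of f from below
  set G : ℕ → ℝ → ℝ := fun s x => gs s * φfn (x/h - (s:ℝ)) * w x with hG
  have hfw : ∀ x, D 0 x * w x = ∑ s ∈ S, G s x := by
    intro x
    simp only [hD, hG]
    rw [Finset.sum_mul]
    apply Finset.sum_congr rfl
    intro s _
    rw [show ψfn 0 = φfn from ψfn_zero]
    simp
  have hφc : Continuous φfn := bφ.continuous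
  have hGc : ∀ s : ℕ, Continuous (G s) := by
    intro s
    simp only [hG]
    exact (continuous_const.mul (hφc.comp ((continuous_id.div_const h).sub
      continuous_const))).mul hwcont
  have hGsupp : ∀ s : ℕ, HasCompactSupport (G s) := by
    intro s
    apply HasCompactSupport.intro (isCompact_Icc (a := (s:ℝ)*h) (b := ((s:ℝ)+1)*h))
    intro x hx
    simp only [hG]
    have hz : φfn (x/h - (s:ℝ)) = 0 := by
      rw [← ψfn_zero]
      by_contra hne
      obtain ⟨a1, a2⟩ := hψsupp 0 s x hne
      exact hx ⟨a1.le, a2.le⟩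
    rw [hz, mul_zero, zero_mul]
  have hGint : ∀ s : ℕ, Integrable (G s) :=
    fun s => (hGc s).integrable_of_hasCompactSupport (hGsupp s)
  have hG0 : ∀ (s : ℕ) (x : ℝ), 0 ≤ G s x := by
    intro s x
    simp only [hG]
    exact mul_nonneg (mul_nonneg (hgs0 s).le (φfn_nonneg _)) (hw_pos x).le
  have hIeq : ∫ x, D 0 x * w x = ∑ s ∈ S, ∫ x, G s x := by
    simp_rw [hfw]
    exact integral_finset_sum S (fun s _ => hGint s)
  have hIφkey : ∀ s : ℕ, ∫ x in Set.Ioc ((s:ℝ)*h) (((s:ℝ)+1)*h), φfn (x/h - (s:ℝ)) = h * Iφ := by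
    intro s
    have hle : (s:ℝ)*h ≤ ((s:ℝ)+1)*h :=
      mul_le_mul_of_nonneg_right (by linarith) hh0.le
    have hcd : ∫ x in (s:ℝ)*h..((s:ℝ)+1)*h, φfn (x/h - (s:ℝ))
        = h • ∫ y in ((s:ℝ)*h)/h..(((s:ℝ)+1)*h)/h, φfn (y - (s:ℝ)) := by
      simpa using intervalIntegral.integral_comp_div (a := (s:ℝ)*h) (b := ((s:ℝ)+1)*h)
        (c := h) (fun y => φfn (y - (s:ℝ))) hh0.ne'
    rw [← intervalIntegral.integral_of_le hle, hcd,
      mul_div_cancel_right₀ _ hh0.ne', mul_div_cancel_right₀ _ hh0.ne',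
      intervalIntegral.integral_comp_sub_right _ (s:ℝ)]
    norm_num
    exact Or.inl rfl
  have hGlow : ∀ s ∈ S, γ * Real.exp (-B) * h * Iφ ≤ ∫ x, G s x := by
    intro s hs
    have hle : (s:ℝ)*h ≤ ((s:ℝ)+1)*h :=
      mul_le_mul_of_nonneg_right (by linarith) hh0.le
    have hstep1 : ∫ x in Set.Ioc ((s:ℝ)*h) (((s:ℝ)+1)*h), G s x ≤ ∫ x, G s x :=
      setIntegral_le_integral (hGint s) (Filter.Eventually.of_forall (hG0 s))
    have hwlow : ∀ x ∈ Set.Ioc ((s:ℝ)*h) (((s:ℝ)+1)*h), Real.exp (-B) * w ((s:ℝ)*h) ≤ w x := by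
      intro x hx
      have hx1 : (s:ℝ)*h < x := hx.1
      have hx2 : x ≤ ((s:ℝ)+1)*h := hx.2
      have hsh0 : 0 ≤ (s:ℝ)*h := (hsran s hs).2
      have hx0 : 0 ≤ x := le_trans hsh0 hx1.le
      have hxL : x ≤ L := le_trans hx2 (hsran s hs).1
      rw [hw_eq x hx0, hw_eq _ hsh0, ← Real.exp_add]
      apply Real.exp_le_exp.2
      have hgap := rpow_gap hlamb hsh0 hx1.le hxL
      have hxmy : x - (s:ℝ)*h ≤ h := by
        have he : ((s:ℝ)+1)*h = (s:ℝ)*h + h := by ring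
        linarith
      have h2 : x ^ lamb - ((s:ℝ)*h) ^ lamb ≤ lamb * 4 ^ (lamb-1) := by
        calc x ^ lamb - ((s:ℝ)*h) ^ lamb ≤ lamb * L ^ (lamb-1) * (x - (s:ℝ)*h) := hgap
          _ ≤ lamb * L ^ (lamb-1) * h := by
              apply mul_le_mul_of_nonneg_left hxmy
              positivity
          _ = lamb * 4 ^ (lamb-1) := by rw [mul_assoc, hL4]
      have h3 : a * (x ^ lamb - ((s:ℝ)*h) ^ lamb) ≤ B := by
        rw [hB]
        have hmul := mul_le_mul_of_nonneg_left h2 ha.le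
        linarith
      linarith [h3]
    have hconst_cont : Continuous (fun x : ℝ =>
        gs s * φfn (x/h - (s:ℝ)) * (Real.exp (-B) * w ((s:ℝ)*h))) :=
      (continuous_const.mul (hφc.comp ((continuous_id.div_const h).sub
        continuous_const))).mul continuous_const
    have hconst_supp : HasCompactSupport (fun x : ℝ =>
        gs s * φfn (x/h - (s:ℝ)) * (Real.exp (-B) * w ((s:ℝ)*h))) := by
      apply HasCompactSupport.intro (isCompact_Icc (a := (s:ℝ)*h) (b := ((s:ℝ)+1)*h))
      intro x hx
      have hz : φfn (x/h - (s:ℝ)) = 0 := by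
        rw [← ψfn_zero]
        by_contra hne
        obtain ⟨a1, a2⟩ := hψsupp 0 s x hne
        exact hx ⟨a1.le, a2.le⟩
      rw [hz, mul_zero, zero_mul]
    have hstep2 : ∫ x in Set.Ioc ((s:ℝ)*h) (((s:ℝ)+1)*h),
          gs s * φfn (x/h - (s:ℝ)) * (Real.exp (-B) * w ((s:ℝ)*h))
        ≤ ∫ x in Set.Ioc ((s:ℝ)*h) (((s:ℝ)+1)*h), G s x := by
      apply setIntegral_mono_on
      · exact (hconst_cont.integrable_of_hasCompactSupport hconst_supp).integrableOn
      · exact (hGint s).integrableOn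
      · exact measurableSet_Ioc
      · intro x hx
        simp only [hG]
        exact mul_le_mul_of_nonneg_left (hwlow x hx)
          (mul_nonneg (hgs0 s).le (φfn_nonneg _))
    have hstep3 : ∫ x in Set.Ioc ((s:ℝ)*h) (((s:ℝ)+1)*h),
          gs s * φfn (x/h - (s:ℝ)) * (Real.exp (-B) * w ((s:ℝ)*h))
        = gs s * (Real.exp (-B) * w ((s:ℝ)*h)) * (h * Iφ) := by
      have e1 : ∀ x : ℝ, gs s * φfn (x/h - (s:ℝ)) * (Real.exp (-B) * w ((s:ℝ)*h))
          = (gs s * (Real.exp (-B) * w ((s:ℝ)*h))) • φfn (x/h - (s:ℝ)) := by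
        intro x; rw [smul_eq_mul]; ring
      simp_rw [e1]
      rw [integral_smul, hIφkey s, smul_eq_mul]
    have hgsw : gs s * (Real.exp (-B) * w ((s:ℝ)*h)) = γ * Real.exp (-B) := by
      simp only [hgs]
      rw [hw_eq _ (hsran s hs).2]
      rw [show γ * Real.exp (a * ((s:ℝ)*h) ^ lamb) * (Real.exp (-B) * Real.exp (-(a * ((s:ℝ)*h) ^ lamb)))
        = γ * Real.exp (-B) * (Real.exp (a * ((s:ℝ)*h) ^ lamb) * Real.exp (-(a * ((s:ℝ)*h) ^ lamb))) from by ring]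
      rw [← Real.exp_add]
      simp
    calc γ * Real.exp (-B) * h * Iφ
        = gs s * (Real.exp (-B) * w ((s:ℝ)*h)) * (h * Iφ) := by rw [hgsw]; ring
      _ = ∫ x in Set.Ioc ((s:ℝ)*h) (((s:ℝ)+1)*h),
            gs s * φfn (x/h - (s:ℝ)) * (Real.exp (-B) * w ((s:ℝ)*h)) := hstep3.symm
      _ ≤ ∫ x in Set.Ioc ((s:ℝ)*h) (((s:ℝ)+1)*h), G s x := hstep2
      _ ≤ ∫ x, G s x := hstep1
  have hIlow : (S.card : ℝ) * (γ * Real.exp (-B) * h * Iφ) ≤ ∫ x, D 0 x * w x := by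
    rw [hIeq]
    have hns := Finset.card_nsmul_le_sum S (fun s => ∫ x, G s x)
      (γ * Real.exp (-B) * h * Iφ) hGlow
    simpa [nsmul_eq_mul] using hns
  -- final assembly
  refine ⟨D 0, hmem, hf0, ?_⟩
  set α : ℝ := -(rLam lamb r - 1/lamb * (1 - q⁻¹)) with hα
  have hP2 : u ^ (α + (1/lamb) * q⁻¹) = u * h ^ (r+1) := by
    have e1 : h ^ (r+1) = u ^ ((1/lamb - 1) * ((r:ℝ)+1)) := by
      rw [hh, ← Real.rpow_natCast (u ^ (1/lamb - 1)) (r+1), ← Real.rpow_mul hu0.le]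
      push_cast
      ring_nf
    have e2 : u * h ^ (r+1) = u ^ ((1:ℝ) + (1/lamb - 1) * ((r:ℝ)+1)) := by
      rw [e1, Real.rpow_add hu0, Real.rpow_one]
    rw [e2]
    congr 1
    rw [hα, rLam]
    ring
  have hLqle : Lq ≤ 4 * u ^ ((1/lamb) * q⁻¹) := by
    have e1 : Lq = 4 ^ q⁻¹ * u ^ ((1/lamb) * q⁻¹) := by
      rw [hLq, hL4', Real.mul_rpow (by norm_num) (Real.rpow_nonneg hu0.le _),
        ← Real.rpow_mul hu0.le]
    rw [e1]
    apply mul_le_mul_of_nonneg_right _ (Real.rpow_nonneg hu0.le _)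
    calc (4:ℝ) ^ q⁻¹ ≤ 4 ^ (1:ℝ) := Real.rpow_le_rpow_of_exponent_le (by norm_num) hqi1
      _ = 4 := Real.rpow_one 4
  have hβ0 : (0:ℝ) < u ^ ((1/lamb) * q⁻¹) := Real.rpow_pos_of_pos hu0 _
  have hQ0 : (0:ℝ) < u ^ α := Real.rpow_pos_of_pos hu0 _
  have hcard : (3:ℝ)*u ≤ (S.card : ℝ) := by
    rw [hu]
    exact_mod_cast hScard
  have hpos1 : 0 ≤ γ * Real.exp (-B) * h * Iφ := by
    apply mul_nonneg (mul_nonneg (mul_nonneg hγ0.le (Real.exp_pos _).le) hh0.le) Iφ_pos.le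
  have hchain1 : 3*u*(γ * Real.exp (-B) * h * Iφ) ≤ (S.card:ℝ) * (γ * Real.exp (-B) * h * Iφ) :=
    mul_le_mul_of_nonneg_right hcard hpos1
  have hkey2 : 3 * Real.exp (-B) * Iφ / (16*((r:ℝ)+1)*C) * u ^ α
      ≤ 3*u*(γ * Real.exp (-B) * h * Iφ) := by
    have e3 : 3*u*(γ * Real.exp (-B) * h * Iφ)
        = 3 * Real.exp (-B) * Iφ * (u * h^(r+1)) / (((r:ℝ)+1) * C * Lq) := by
      rw [hγ, pow_succ]
      field_simp
    rw [e3, ← hP2, Real.rpow_add hu0]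
    have e4 : 3 * Real.exp (-B) * Iφ * (u^α * u^((1/lamb)*q⁻¹)) / (((r:ℝ)+1) * C * (4 * u^((1/lamb)*q⁻¹)))
        ≤ 3 * Real.exp (-B) * Iφ * (u^α * u^((1/lamb)*q⁻¹)) / (((r:ℝ)+1) * C * Lq) := by
      apply div_le_div_of_nonneg_left
      · apply mul_nonneg
        apply mul_nonneg (mul_nonneg (by norm_num) (Real.exp_pos _).le) Iφ_pos.le
        positivity
      · positivity
      · exact mul_le_mul_of_nonneg_left hLqle (by positivity)
    refine le_trans ?_ e4
    have e5 : 3 * Real.exp (-B) * Iφ * (u^α * u^((1/lamb)*q⁻¹)) / (((r:ℝ)+1) * C * (4 * u^((1/lamb)*q⁻¹)))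
        = 3 * Real.exp (-B) * Iφ * u^α / (4*((r:ℝ)+1) * C) := by
      field_simp
    rw [e5]
    rw [show 3 * Real.exp (-B) * Iφ / (16*((r:ℝ)+1)*C) * u ^ α
      = 3 * Real.exp (-B) * Iφ * u^α / (16*((r:ℝ)+1)*C) from by ring]
    apply div_le_div_of_nonneg_left
    · exact mul_nonneg (mul_nonneg (mul_nonneg (by norm_num) (Real.exp_pos _).le) Iφ_pos.le) hQ0.le
    · positivity
    · linarith [mul_pos hr1 hC0]
  calc 3 * Real.exp (-B) * Iφ / (16*((r:ℝ)+1)*C) * u ^ α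
      ≤ 3*u*(γ * Real.exp (-B) * h * Iφ) := hkey2
    _ ≤ (S.card:ℝ) * (γ * Real.exp (-B) * h * Iφ) := hchain1
    _ ≤ ∫ x, D 0 x * w x := hIlow

end KeyLemma

/-- Lower bound `Int_n(𝐖^r_{p,w}(ℝ)) ≥ c n^{-r_λ + (1/λ)(1 - 1/p)}`
for optimal Freud-weighted numerical integration on the unit ball of `W^r_{p,w}(ℝ)`. -/
theorem stmt11 (lamb a : ℝ) (hlamb : 1 < lamb) (ha : 0 < a)
    (p : ℝ≥0∞) (hp : 1 ≤ p) (r : ℕ) (hr : 1 ≤ r)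
    (hpos : 0 < rLam lamb r - (1 / lamb) * (1 - p.toReal⁻¹)) :
    ∃ c : ℝ, 0 < c ∧ ∀ n : ℕ, 1 ≤ n →
      ENNReal.ofReal c * (n : ℝ≥0∞) ^ (-(rLam lamb r - (1 / lamb) * (1 - p.toReal⁻¹)))
        ≤ IntWidth n (WBall (freudW lamb a) p r) (freudW lamb a) := by
  classical
  obtain ⟨Cf, hCf⟩ : ∃ Cf : ℕ → ℝ, ∀ k, 0 ≤ Cf k ∧ ∀ x, |ψfn k x| ≤ Cf k := by
    choose Cf h1 h2 using fun k => ψfn_bound k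
    exact ⟨Cf, fun k => ⟨h1 k, h2 k⟩⟩
  set C : ℝ := 1 + ∑ k ∈ Finset.range (r+1), Cf k with hC
  have hC1 : 1 ≤ C := by
    rw [hC]
    have h0 : 0 ≤ ∑ k ∈ Finset.range (r+1), Cf k := Finset.sum_nonneg fun k _ => (hCf k).1
    linarith
  have hCb : ∀ k ≤ r, ∀ x, |ψfn k x| ≤ C := by
    intro k hk x
    calc |ψfn k x| ≤ Cf k := (hCf k).2 x
      _ ≤ ∑ j ∈ Finset.range (r+1), Cf j :=
          Finset.single_le_sum (fun j _ => (hCf j).1) (Finset.mem_range_succ_iff.2 hk)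
      _ ≤ C := by rw [hC]; linarith
  set c : ℝ := 3 * Real.exp (-(a * lamb * 4 ^ (lamb - 1))) * Iφ / (16 * ((r:ℝ)+1) * C) with hc
  have hc0 : 0 < c := by
    rw [hc]
    have h1 : 0 < Real.exp (-(a * lamb * 4 ^ (lamb - 1))) := Real.exp_pos _
    have h2 := Iφ_pos
    have hCpos : (0:ℝ) < C := lt_of_lt_of_le one_pos hC1
    positivity
  refine ⟨c, hc0, ?_⟩
  intro n hn
  rw [IntWidth]
  refine le_iInf fun k => le_iInf fun hk => le_iInf fun ξ => le_iInf fun μ => ?_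
  obtain ⟨f, hfW, hf0, hint⟩ := key_lemma lamb a hlamb ha p hp r C hC1 hCb n hn k hk ξ
  apply le_iSup₂_of_le f hfW
  have hsum0 : ∑ i, μ i * f (ξ i) = 0 := Finset.sum_eq_zero fun i _ => by rw [hf0 i, mul_zero]
  rw [hsum0, sub_zero]
  have hnr0 : (0:ℝ) < (n:ℝ) := by exact_mod_cast Nat.lt_of_lt_of_le Nat.zero_lt_one hn
  have hcast : ((n:ℝ≥0∞)) ^ (-(rLam lamb r - 1 / lamb * (1 - p.toReal⁻¹)))
      = ENNReal.ofReal ((n:ℝ) ^ (-(rLam lamb r - 1 / lamb * (1 - p.toReal⁻¹)))) := by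
    rw [← ENNReal.ofReal_natCast n, ENNReal.ofReal_rpow_of_pos hnr0]
  rw [hcast, ← ENNReal.ofReal_mul hc0.le]
  apply ENNReal.ofReal_le_ofReal
  have hint' : c * (n:ℝ) ^ (-(rLam lamb r - 1 / lamb * (1 - p.toReal⁻¹)))
      ≤ ∫ x, f x * freudW lamb a x := by rw [hc]; exact hint
  calc c * (n:ℝ) ^ (-(rLam lamb r - 1 / lamb * (1 - p.toReal⁻¹)))
      ≤ ∫ x, f x * freudW lamb a x := hint'
    _ ≤ |∫ x, f x * freudW lamb a x| := le_abs_self _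
end

section
/- Let λ > 1, a > 0, ℓ ∈ ℕ, and j₀ ≥ ℓ − 1 an integer. Then there exist a number ρ = ρ(a,λ,ℓ,j₀) with 0 < ρ < 1 and a constant C > 0 such that for every m ∈ ℕ, every integer k with 0 ≤ k ≤ m − 1, all integers s, i, j with |s − k| ≤ ℓ − 1, 0 ≤ i ≤ 2ℓ, |j| ≤ j₀, and every x ∈ [x_k, x_{k+1}], setting ξ := s + i − ℓ and η := s − j, one has (x − x_ξ)_+^{2ℓ−1} · w(x) ≤ C h_m^{2ℓ−1} · w(x_η). -/
open MeasureTheory Real Set Filter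
open scoped ENNReal NNReal

lemma rpow_sub_rpow_le_aux (lamb M u v : ℝ) (hl : 1 ≤ lamb)
    (hu : u ∈ Set.Icc 0 M) (hv : v ∈ Set.Icc 0 M) :
    v ^ lamb - u ^ lamb ≤ lamb * M ^ (lamb - 1) * |v - u| := by
  have key : ‖(fun t : ℝ => t ^ lamb) v - (fun t : ℝ => t ^ lamb) u‖
      ≤ lamb * M ^ (lamb - 1) * ‖v - u‖ := by
    apply Convex.norm_image_sub_le_of_norm_hasDerivWithin_le
      (f' := fun t => lamb * t ^ (lamb - 1))
      (fun t ht => (Real.hasDerivAt_rpow_const (Or.inr hl)).hasDerivWithinAt)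
      (fun t ht => ?_) (convex_Icc 0 M) hu hv
    rw [Real.norm_eq_abs, abs_mul, abs_of_nonneg (by linarith : (0:ℝ) ≤ lamb),
      abs_of_nonneg (Real.rpow_nonneg ht.1 _)]
    exact mul_le_mul_of_nonneg_left
      (Real.rpow_le_rpow ht.1 ht.2 (by linarith)) (by linarith)
  calc v ^ lamb - u ^ lamb ≤ |v ^ lamb - u ^ lamb| := le_abs_self _
    _ ≤ lamb * M ^ (lamb - 1) * |v - u| := key

/-- Key pointwise weight inequality: for a suitable `0 < ρ < 1`,
`(x - x_ξ)_+^{2ℓ-1} w(x) ≤ C h_m^{2ℓ-1} w(x_η)` for all `x ∈ [x_k, x_{k+1}]`, where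
`ξ = s + i - ℓ`, `η = s - j`, `0 ≤ k ≤ m-1`, `|s-k| ≤ ℓ-1`, `0 ≤ i ≤ 2ℓ`, `|j| ≤ j₀`. -/
theorem stmt13 (lamb a : ℝ) (hlamb : 1 < lamb) (ha : 0 < a)
    (ℓ : ℕ) (hℓ : 1 ≤ ℓ) (j₀ : ℕ) (hj₀ : ℓ - 1 ≤ j₀) :
    ∃ ρ : ℝ, 0 < ρ ∧ ρ < 1 ∧ ∃ C : ℝ, 0 < C ∧
      ∀ m : ℕ, 1 ≤ m → ∀ k s i j : ℤ,
        0 ≤ k → k ≤ (m : ℤ) - 1 → |s - k| ≤ (ℓ : ℤ) - 1 →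
        0 ≤ i → i ≤ 2 * (ℓ : ℤ) → |j| ≤ (j₀ : ℤ) →
        ∀ x ∈ Set.Icc ((k : ℝ) * hStep lamb ρ m) (((k : ℝ) + 1) * hStep lamb ρ m),
          max 0 (x - ((s + i - ℓ : ℤ) : ℝ) * hStep lamb ρ m) ^ (2 * ℓ - 1) * freudW lamb a x
            ≤ C * hStep lamb ρ m ^ (2 * ℓ - 1) *
              freudW lamb a (((s - j : ℤ) : ℝ) * hStep lamb ρ m) := by
  have hℓ1 : (1:ℝ) ≤ (ℓ:ℝ) := by exact_mod_cast hℓ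
  have hν : 0 < nuLam lamb := by
    have h1 : (0:ℝ) < (2 : ℝ) ^ (lamb - 1) := Real.rpow_pos_of_pos two_pos _
    have h2 : 0 < Real.Gamma lamb := Real.Gamma_pos_of_pos (by linarith)
    have h3 : 0 < Real.Gamma (lamb / 2) := Real.Gamma_pos_of_pos (by linarith)
    exact Real.rpow_pos_of_pos (by positivity) _
  set ν := nuLam lamb with hνdef
  set L : ℝ := (ℓ : ℝ) + (j₀ : ℝ) with hLdef
  have hL0 : 0 ≤ L := by rw [hLdef]; positivity
  set B : ℝ := lamb * (1 + L) ^ (lamb - 1) * L * ν ^ lamb with hBdef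
  clear_value ν L B
  have hPnn : 0 ≤ (1 + L) ^ (lamb - 1) := Real.rpow_nonneg (by linarith) _
  have hB0 : 0 ≤ B := by
    rw [hBdef]
    exact mul_nonneg (mul_nonneg (mul_nonneg (by linarith) hPnn) hL0)
      (Real.rpow_nonneg hν.le _)
  have h2ℓpos : (0:ℝ) < 2 * (ℓ:ℝ) := by linarith
  refine ⟨1/2, by norm_num, by norm_num, (2 * (ℓ:ℝ)) ^ (2*ℓ-1) * Real.exp (a * B),
    mul_pos (pow_pos h2ℓpos _) (Real.exp_pos _), ?_⟩
  intro m hm k s i j hk0 hk1 hs hi0 hi1 hj x hx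
  set h := hStep lamb (1/2) m with hhdef
  clear_value h
  have hmR : (1:ℝ) ≤ (m:ℝ) := by exact_mod_cast hm
  have hm0 : (m:ℝ) ≠ 0 := by linarith
  have ham : 0 < aMRS lamb m := by
    have : (0:ℝ) < (m:ℝ) ^ (1/lamb) := Real.rpow_pos_of_pos (by linarith) _
    rw [aMRS, ← hνdef]
    exact mul_pos hν this
  have hh0 : 0 < h := by
    rw [hhdef, hStep]
    have : (0:ℝ) < (m:ℝ) := by linarith
    positivity
  have hmh : (m:ℝ) * h = aMRS lamb m / 2 := by
    rw [hhdef, hStep]; field_simp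
  have h2m : 2 * (m:ℝ) * h = aMRS lamb m := by
    rw [hhdef, hStep]; field_simp
  -- real casts of the integer hypotheses
  obtain ⟨hs1, hs2⟩ := abs_le.mp hs
  obtain ⟨hj1, hj2⟩ := abs_le.mp hj
  have hkR : (0:ℝ) ≤ (k:ℝ) := by exact_mod_cast hk0
  have hk1R : (k:ℝ) ≤ (m:ℝ) - 1 := by exact_mod_cast hk1
  have hs1R : (k:ℝ) - ((ℓ:ℝ) - 1) ≤ (s:ℝ) := by
    exact_mod_cast (by linarith : k - ((ℓ:ℤ) - 1) ≤ s)
  have hs2R : (s:ℝ) ≤ (k:ℝ) + ((ℓ:ℝ) - 1) := by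
    exact_mod_cast (by linarith : s ≤ k + ((ℓ:ℤ) - 1))
  have hj1R : -(j₀:ℝ) ≤ (j:ℝ) := by exact_mod_cast hj1
  have hj2R : (j:ℝ) ≤ (j₀:ℝ) := by exact_mod_cast hj2
  have hi0R : (0:ℝ) ≤ (i:ℝ) := by exact_mod_cast hi0
  have hi1R : (i:ℝ) ≤ 2 * (ℓ:ℝ) := by exact_mod_cast hi1
  obtain ⟨hx1, hx2⟩ := hx
  have hx0 : 0 ≤ x := le_trans (by positivity) hx1
  -- spline part
  have hcast1 : ((s + i - ℓ : ℤ) : ℝ) = (s:ℝ) + (i:ℝ) - (ℓ:ℝ) := by push_cast; ring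
  have part1 : max 0 (x - ((s + i - ℓ : ℤ) : ℝ) * h) ≤ 2 * (ℓ:ℝ) * h := by
    apply max_le (by positivity)
    rw [hcast1]
    nlinarith only [hx2, mul_nonneg (show (0:ℝ) ≤ (s:ℝ) + (i:ℝ) - (ℓ:ℝ) - ((k:ℝ) - 2*(ℓ:ℝ) + 1)
      by linarith) hh0.le]
  -- weight part
  set e : ℝ := ((s - j : ℤ) : ℝ) with hedef
  clear_value e
  have hecast : e = (s:ℝ) - (j:ℝ) := by rw [hedef]; push_cast; ring
  set M : ℝ := (1 + L) * aMRS lamb m with hMdef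
  clear_value M
  have hMnn : 0 ≤ M := by
    rw [hMdef]; exact mul_nonneg (by linarith) ham.le
  have hxleM : x ≤ M := by
    have hx3 : x ≤ (m:ℝ) * h := by
      have h5 : ((k:ℝ) + 1) * h ≤ (m:ℝ) * h :=
        mul_le_mul_of_nonneg_right (by linarith) hh0.le
      linarith
    rw [hMdef]; rw [hmh] at hx3
    nlinarith only [hx3, mul_nonneg hL0 ham.le, ham.le]
  have heM : |e * h| ≤ M := by
    rw [abs_mul, abs_of_pos hh0]
    have he1 : |e| ≤ (m:ℝ) - 1 + ((ℓ:ℝ) - 1) + (j₀:ℝ) := by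
      rw [hecast, abs_le]
      constructor <;> linarith
    have he2 : |e| * h ≤ ((m:ℝ) - 1 + ((ℓ:ℝ) - 1) + (j₀:ℝ)) * h :=
      mul_le_mul_of_nonneg_right he1 hh0.le
    have he3 : ((m:ℝ) - 1 + ((ℓ:ℝ) - 1) + (j₀:ℝ)) ≤ (1 + L) * m := by
      rw [hLdef]
      nlinarith only [hmR, hℓ1, Nat.cast_nonneg (α := ℝ) j₀,
        mul_nonneg (show (0:ℝ) ≤ (ℓ:ℝ) + (j₀:ℝ) by positivity)
          (show (0:ℝ) ≤ (m:ℝ) - 1 by linarith)]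
    have he4 : ((m:ℝ) - 1 + ((ℓ:ℝ) - 1) + (j₀:ℝ)) * h ≤ (1 + L) * ((m:ℝ) * h) := by
      nlinarith only [mul_le_mul_of_nonneg_right he3 hh0.le]
    rw [hmh] at he4
    rw [hMdef]
    nlinarith only [he2, he4, mul_nonneg hL0 ham.le, ham.le]
  have hdiff : |e * h - x| ≤ L * h := by
    rw [hecast, abs_le, hLdef]
    constructor
    · nlinarith only [hx2, mul_nonneg (show (0:ℝ) ≤ (s:ℝ) - (j:ℝ) - ((k:ℝ) - (ℓ:ℝ) + 1 - (j₀:ℝ))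
        by linarith) hh0.le]
    · nlinarith only [hx1, mul_nonneg (show (0:ℝ) ≤ (k:ℝ) + (ℓ:ℝ) - 1 + (j₀:ℝ) - ((s:ℝ) - (j:ℝ))
        by linarith) hh0.le, hh0.le]
  -- key rpow bound
  have hMr : M ^ (lamb - 1) = (1 + L) ^ (lamb - 1) * aMRS lamb m ^ (lamb - 1) := by
    rw [hMdef, Real.mul_rpow (by linarith) ham.le]
  have hamlam : aMRS lamb m ^ (lamb - 1) * aMRS lamb m = ν ^ lamb * m := by
    rw [← Real.rpow_add_one ham.ne' (lamb - 1), sub_add_cancel, aMRS, ← hνdef,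
      Real.mul_rpow hν.le (Real.rpow_nonneg (Nat.cast_nonneg m) _),
      ← Real.rpow_mul (Nat.cast_nonneg m), one_div,
      inv_mul_cancel₀ (show lamb ≠ 0 by intro hc; rw [hc] at hlamb; linarith),
      Real.rpow_one]
  have key2 : 2 * (m:ℝ) *
      (lamb * ((1 + L) ^ (lamb - 1) * aMRS lamb m ^ (lamb - 1)) * (L * h)) = B * (m:ℝ) := by
    rw [hBdef]
    linear_combination (lamb * (1 + L) ^ (lamb - 1) * L * aMRS lamb m ^ (lamb - 1)) * h2m
      + (lamb * (1 + L) ^ (lamb - 1) * L) * hamlam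
  have hX : lamb * M ^ (lamb - 1) * (L * h) = B / 2 := by
    rw [hMr]
    exact mul_left_cancel₀ (show 2 * (m:ℝ) ≠ 0 by positivity)
      (key2.trans (by ring))
  have hMcoef : 0 ≤ lamb * M ^ (lamb - 1) :=
    mul_nonneg (by linarith) (Real.rpow_nonneg hMnn _)
  have hkey : |e * h| ^ lamb - |x| ^ lamb ≤ B := by
    calc |e * h| ^ lamb - |x| ^ lamb
        ≤ lamb * M ^ (lamb - 1) * |(|e * h| - |x|)| :=
          rpow_sub_rpow_le_aux lamb M |x| |e * h| hlamb.le
            ⟨abs_nonneg _, by rwa [abs_of_nonneg hx0]⟩ ⟨abs_nonneg _, heM⟩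
      _ ≤ lamb * M ^ (lamb - 1) * |e * h - x| :=
          mul_le_mul_of_nonneg_left (abs_abs_sub_abs_le_abs_sub _ _) hMcoef
      _ ≤ lamb * M ^ (lamb - 1) * (L * h) := mul_le_mul_of_nonneg_left hdiff hMcoef
      _ = B / 2 := hX
      _ ≤ B := by linarith
  have part2 : freudW lamb a x ≤ Real.exp (a * B) * freudW lamb a (e * h) := by
    rw [freudW, freudW, ← Real.exp_add, Real.exp_le_exp]
    nlinarith only [mul_le_mul_of_nonneg_left hkey ha.le]
  -- combine
  have p1 : max 0 (x - ((s + i - ℓ : ℤ) : ℝ) * h) ^ (2*ℓ-1) ≤ (2 * (ℓ:ℝ) * h) ^ (2*ℓ-1) :=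
    pow_le_pow_left₀ (le_max_left 0 _) part1 _
  have hw0 : 0 ≤ freudW lamb a x := (Real.exp_pos _).le
  calc max 0 (x - ((s + i - ℓ : ℤ) : ℝ) * h) ^ (2*ℓ-1) * freudW lamb a x
      ≤ (2 * (ℓ:ℝ) * h) ^ (2*ℓ-1) * (Real.exp (a * B) * freudW lamb a (e * h)) := by
        exact mul_le_mul p1 part2 hw0
          (pow_nonneg (mul_nonneg (by positivity) hh0.le) _)
    _ = (2 * (ℓ:ℝ)) ^ (2*ℓ-1) * Real.exp (a * B) * h ^ (2*ℓ-1) * freudW lamb a (e * h) := by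
        rw [mul_pow]; ring
end
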